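/- Let λ be a partition of n with variables f_{i,j} and Wronskian coefficients r_s as in the standard setup. If the linear monomial f_{i,j} occurs with nonzero coefficient in r_s, then s = j. -/

import Mathlib

/-- `d_i = λ_i + n − i`, with rows indexed by `i : Fin n` (so `i` stands for row `i+1`). -/
def dSeq (n : ℕ) (lam : Fin n → ℕ) (i : Fin n) : ℕ := lam i + (n - 1 - (i : ℕ))

/-- `P = {d_1, …, d_n}`. -/
def dSet (n : ℕ) (lam : Fin n → ℕ) : Finset ℕ := Finset.image (dSeq n lam) Finset.univ

/-- `f_i = u^{d_i} + Σ_{j : 1 ≤ j ≤ d_i, d_i−j ∉ P} f_{i,j} u^{d_i−j}`, a polynomial in `u`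
over the polynomial ring `ℂ[f_{i,j}]` (the variable `f_{i,j}` is `MvPolynomial.X (i,j)`). -/
noncomputable def rowPoly (n : ℕ) (lam : Fin n → ℕ) (i : Fin n) :
    Polynomial (MvPolynomial (Fin n × ℕ) ℂ) :=
  Polynomial.X ^ (dSeq n lam i) +
    ∑ j ∈ (Finset.Icc 1 (dSeq n lam i)).filter (fun j => dSeq n lam i - j ∉ dSet n lam),
      Polynomial.C (MvPolynomial.X (i, j)) * Polynomial.X ^ (dSeq n lam i - j)

/-- The Wronskian `Wr(f_1,…,f_n)`. -/
noncomputable def wronskianPoly (n : ℕ) (lam : Fin n → ℕ) :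
    Polynomial (MvPolynomial (Fin n × ℕ) ℂ) :=
  Matrix.det (Matrix.of fun a b : Fin n => Polynomial.derivative^[(a : ℕ)] (rowPoly n lam b))

/-- `r_s`: the coefficient of `u^{n−s}` in `Wr(f_1,…,f_n)`. -/
noncomputable def rCoeff (n : ℕ) (lam : Fin n → ℕ) (s : ℕ) : MvPolynomial (Fin n × ℕ) ℂ :=
  (wronskianPoly n lam).coeff (n - s)

open Polynomial

/-- Extracting the coefficient of the linear monomial `X v` equals substituting
`ε` for `X v` and `0` for all other variables, then taking the `ε`-coefficient. -/
lemma coeff_single_one_eq_aeval {σ : Type*} [DecidableEq σ] (v : σ)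
    (p : MvPolynomial σ ℂ) :
    MvPolynomial.coeff (Finsupp.single v 1) p =
      ((MvPolynomial.aeval (fun w : σ => if w = v then (Polynomial.X : Polynomial ℂ) else 0)) p).coeff 1 := by
  induction p using MvPolynomial.induction_on' with
  | add p q hp hq => simp [hp, hq]
  | monomial m c =>
    rw [MvPolynomial.coeff_monomial, MvPolynomial.aeval_monomial]
    by_cases hsupp : ∀ w ∈ m.support, w = v
    · have hprod : (m.prod fun w k => (if w = v then (Polynomial.X : Polynomial ℂ) else 0) ^ k)
          = Polynomial.X ^ (m v) := by
        rcases Finset.eq_empty_or_nonempty m.support with he | ⟨w, hw⟩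
        · have hmv : m v = 0 := by
            by_contra h
            have hm := Finsupp.mem_support_iff.2 h
            rw [he] at hm
            exact absurd hm (Finset.notMem_empty v)
          simp [Finsupp.prod, he, hmv]
        · have hwv : w = v := hsupp w hw
          subst hwv
          have hsupp' : m.support = {w} := by
            apply Finset.Subset.antisymm
            · intro x hx; simp [hsupp x hx]
            · intro x hx; simpa [Finset.mem_singleton.1 hx] using hw
          simp [Finsupp.prod, hsupp']
      rw [hprod]
      by_cases hmv : m = Finsupp.single v 1
      · subst hmv
        simp
      · have hne : m v ≠ 1 := by
          intro h1
          apply hmv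
          ext w
          by_cases hwv : w = v
          · subst hwv; simp [h1]
          · have : w ∉ m.support := fun hw => hwv (hsupp w hw)
            simp [Finsupp.notMem_support_iff.1 this, Finsupp.single_apply,
              Ne.symm hwv]
        rw [if_neg hmv]
        have : (algebraMap ℂ (Polynomial ℂ)) c = Polynomial.C c := rfl
        rw [this, Polynomial.coeff_C_mul, Polynomial.coeff_X_pow,
          if_neg (fun h : (1 : ℕ) = m v => hne h.symm), mul_zero]
    · push_neg at hsupp
      obtain ⟨w, hw, hwv⟩ := hsupp
      have hzero : (m.prod fun w k => (if w = v then (Polynomial.X : Polynomial ℂ) else 0) ^ k) = 0 := by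
        refine Finset.prod_eq_zero hw ?_
        simp only [if_neg hwv]
        exact zero_pow (Finsupp.mem_support_iff.1 hw)
      rw [hzero, mul_zero, Polynomial.coeff_zero]
      have : m ≠ Finsupp.single v 1 := by
        intro h; subst h
        simp only [Finsupp.support_single_ne_zero _ one_ne_zero, Finset.mem_singleton] at hw
        exact hwv hw
      rw [if_neg this]

/-- Degree concentration for Wronskian-type determinants of pure powers. -/
lemma det_deriv_pow_coeff {n : ℕ} (e : Fin n → ℕ) (k : ℕ)
    (h : (Matrix.det (Matrix.of fun a b : Fin n =>
        Polynomial.derivative^[(a : ℕ)] ((Polynomial.X : Polynomial ℂ) ^ e b))).coeff k ≠ 0) :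
    k + ∑ a : Fin n, (a : ℕ) = ∑ b, e b := by
  rw [Matrix.det_apply] at h
  rw [Polynomial.finset_sum_coeff] at h
  obtain ⟨σ, -, hσ⟩ := Finset.exists_ne_zero_of_sum_ne_zero h
  rw [Polynomial.coeff_smul] at hσ
  have hprodne : (∏ b : Fin n, (Matrix.of fun a b : Fin n =>
      Polynomial.derivative^[(a : ℕ)] ((Polynomial.X : Polynomial ℂ) ^ e b)) (σ b) b).coeff k ≠ 0 := by
    intro h0
    rw [h0] at hσ
    simp at hσ
  have hform : (∏ b : Fin n, (Matrix.of fun a b : Fin n =>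
      Polynomial.derivative^[(a : ℕ)] ((Polynomial.X : Polynomial ℂ) ^ e b)) (σ b) b)
      = Polynomial.C (∏ b : Fin n, ((e b).descFactorial (σ b) : ℂ)) *
        Polynomial.X ^ (∑ b : Fin n, (e b - (σ b : ℕ))) := by
    simp only [Matrix.of_apply, Polynomial.iterate_derivative_X_pow_eq_C_mul]
    rw [Finset.prod_mul_distrib, ← map_prod, Finset.prod_pow_eq_pow_sum]
  rw [hform, Polynomial.coeff_C_mul, Polynomial.coeff_X_pow] at hprodne
  have hk : k = ∑ b : Fin n, (e b - (σ b : ℕ)) := by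
    by_contra hne
    rw [if_neg hne] at hprodne
    simp at hprodne
  have hcne : (∏ b : Fin n, ((e b).descFactorial (σ b) : ℂ)) ≠ 0 := by
    intro h0; rw [h0] at hprodne; simp at hprodne
  have hle : ∀ b : Fin n, (σ b : ℕ) ≤ e b := by
    intro b
    by_contra hlt
    push_neg at hlt
    apply hcne
    refine Finset.prod_eq_zero (Finset.mem_univ b) ?_
    rw [Nat.descFactorial_eq_zero_iff_lt.2 hlt]
    simp
  have hsum : ∑ b : Fin n, (e b - (σ b : ℕ)) + ∑ b : Fin n, (σ b : ℕ) = ∑ b, e b := by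
    rw [← Finset.sum_add_distrib]
    exact Finset.sum_congr rfl fun b _ => Nat.sub_add_cancel (hle b)
  have hperm : ∑ b : Fin n, ((σ b : Fin n) : ℕ) = ∑ a : Fin n, (a : ℕ) :=
    Equiv.sum_comp σ (fun a => (a : ℕ))
  omega

/-- Iterated derivative is additive. -/
lemma iter_deriv_add {R : Type*} [CommSemiring R] (k : ℕ) (p q : Polynomial R) :
    Polynomial.derivative^[k] (p + q)
      = Polynomial.derivative^[k] p + Polynomial.derivative^[k] q := by
  induction k generalizing p q with
  | zero => simp
  | succ k ih => simp [Function.iterate_succ_apply, ih]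

/-- Lemma: if the linear monomial `f_{i,j}` occurs with nonzero coefficient in the
Wronskian coefficient `r_s` (for `0 ≤ s ≤ n`), then `s = j`. -/
theorem linear_term_occurs_only_in_rCoeff_deg (n : ℕ) (lam : Fin n → ℕ)
    (hanti : Antitone lam) (hsum : ∑ i, lam i = n)
    (i : Fin n) (j : ℕ) (hj1 : 1 ≤ j) (hj2 : j ≤ dSeq n lam i)
    (hjP : dSeq n lam i - j ∉ dSet n lam)
    (s : ℕ) (hs : s ≤ n)
    (hocc : MvPolynomial.coeff (Finsupp.single (i, j) 1) (rCoeff n lam s) ≠ 0) :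
    s = j := by
  classical
  set ψ : MvPolynomial (Fin n × ℕ) ℂ →+* Polynomial ℂ :=
    (MvPolynomial.aeval (fun w : Fin n × ℕ =>
      if w = (i, j) then (Polynomial.X : Polynomial ℂ) else 0)).toRingHom with hψ
  have hψX : ∀ w : Fin n × ℕ,
      ψ (MvPolynomial.X w) = if w = (i, j) then Polynomial.X else 0 := fun w => by
    simp [hψ]
  set e : Fin n → ℕ := fun b => if b = i then dSeq n lam i - j else dSeq n lam b with he
  set A : Matrix (Fin n) (Fin n) (Polynomial ℂ) :=
    Matrix.of (fun a b : Fin n =>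
      Polynomial.derivative^[(a : ℕ)] ((Polynomial.X : Polynomial ℂ) ^ dSeq n lam b)) with hA
  set B : Matrix (Fin n) (Fin n) (Polynomial ℂ) :=
    Matrix.of (fun a b : Fin n =>
      Polynomial.derivative^[(a : ℕ)] ((Polynomial.X : Polynomial ℂ) ^ e b)) with hB
  set mc : Polynomial ℂ →+* Polynomial (Polynomial ℂ) :=
    Polynomial.mapRingHom Polynomial.C with hmc
  -- the mapped row polynomials
  have hg : ∀ b : Fin n, (rowPoly n lam b).map ψ =
      Polynomial.X ^ dSeq n lam b +
        (if b = i then Polynomial.C Polynomial.X *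
          Polynomial.X ^ (dSeq n lam i - j) else 0) := by
    intro b
    rw [rowPoly, Polynomial.map_add, Polynomial.map_pow, Polynomial.map_X]
    congr 1
    rw [Polynomial.map_sum]
    by_cases hb : b = i
    · subst hb
      rw [if_pos rfl]
      have hjmem : j ∈ (Finset.Icc 1 (dSeq n lam b)).filter
          (fun j' => dSeq n lam b - j' ∉ dSet n lam) := by
        simp only [Finset.mem_filter, Finset.mem_Icc]
        exact ⟨⟨hj1, hj2⟩, hjP⟩
      refine Finset.sum_eq_single_of_mem j hjmem ?_ |>.trans ?_
      · intro j' hj' hne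
        rw [Polynomial.map_mul, Polynomial.map_C, hψX (b, j'),
          if_neg (by simp [hne]), Polynomial.map_pow, Polynomial.map_X]
        simp
      · rw [Polynomial.map_mul, Polynomial.map_C, hψX (b, j), if_pos rfl,
          Polynomial.map_pow, Polynomial.map_X]
    · rw [if_neg hb]
      refine Finset.sum_eq_zero ?_
      intro j' hj'
      rw [Polynomial.map_mul, Polynomial.map_C, hψX (b, j'),
        if_neg (by simp [hb]), Polynomial.map_pow, Polynomial.map_X]
      simp
  -- key identity for the mapped Wronskian
  have hmap : (wronskianPoly n lam).map ψ = mc A.det + Polynomial.C Polynomial.X * mc B.det := by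
    have h1 : (wronskianPoly n lam).map ψ =
        Matrix.det (Matrix.of fun a b : Fin n =>
          Polynomial.derivative^[(a : ℕ)] ((rowPoly n lam b).map ψ)) := by
      rw [wronskianPoly, ← Polynomial.coe_mapRingHom, RingHom.map_det]
      congr 1
      ext a b
      simp [Matrix.map_apply, Polynomial.iterate_derivative_map]
    rw [h1]
    have h2 : (Matrix.of fun a b : Fin n =>
          Polynomial.derivative^[(a : ℕ)] ((rowPoly n lam b).map ψ)) =
        (A.map (mc : Polynomial ℂ → Polynomial (Polynomial ℂ))).updateCol i
          ((fun a : Fin n => mc (A a i)) +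
            (Polynomial.C Polynomial.X : Polynomial (Polynomial ℂ)) •
              (fun a : Fin n => mc (B a i))) := by
      funext a b
      by_cases hb : b = i
      · subst hb
        rw [Matrix.updateCol_apply, if_pos rfl]
        simp only [Pi.add_apply, Pi.smul_apply, smul_eq_mul]
        rw [Matrix.of_apply, hg b, if_pos rfl, iter_deriv_add,
          Polynomial.iterate_derivative_C_mul]
        refine congrArg₂ (· + ·) ?_ ?_
        · rw [hA, hmc]
          simp only [Matrix.of_apply, Polynomial.coe_mapRingHom]
          rw [← Polynomial.iterate_derivative_map, Polynomial.map_pow, Polynomial.map_X]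
        · congr 1
          rw [hB, hmc]
          simp only [Matrix.of_apply, Polynomial.coe_mapRingHom]
          rw [← Polynomial.iterate_derivative_map, Polynomial.map_pow, Polynomial.map_X]
          simp [he]
      · rw [Matrix.updateCol_apply, if_neg hb]
        rw [Matrix.map_apply, Matrix.of_apply, hg b, if_neg hb, add_zero]
        rw [hA, hmc]
        simp only [Matrix.of_apply, Polynomial.coe_mapRingHom]
        rw [← Polynomial.iterate_derivative_map, Polynomial.map_pow, Polynomial.map_X]
    rw [h2, Matrix.det_updateCol_add, Matrix.det_updateCol_smul]
    refine congrArg₂ (· + ·) ?_ ?_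
    · have : (fun a : Fin n => mc (A a i)) =
          (fun a : Fin n => (A.map (mc : Polynomial ℂ → Polynomial (Polynomial ℂ))) a i) := rfl
      rw [this, Matrix.updateCol_eq_self, ← RingHom.mapMatrix_apply, ← RingHom.map_det]
    · congr 1
      have h3 : (A.map (mc : Polynomial ℂ → Polynomial (Polynomial ℂ))).updateCol i
          (fun a : Fin n => mc (B a i)) =
          B.map (mc : Polynomial ℂ → Polynomial (Polynomial ℂ)) := by
        funext a b
        by_cases hb : b = i
        · subst hb
          rw [Matrix.updateCol_apply, if_pos rfl, Matrix.map_apply]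
        · rw [Matrix.updateCol_apply, if_neg hb, Matrix.map_apply, Matrix.map_apply]
          congr 1
          rw [hA, hB]
          simp only [Matrix.of_apply]
          congr 2
          rw [he]
          simp [if_neg hb]
      rw [h3, ← RingHom.mapMatrix_apply, ← RingHom.map_det]
  -- extract the linear coefficient
  have h1 : MvPolynomial.coeff (Finsupp.single (i, j) 1) (rCoeff n lam s)
      = (B.det).coeff (n - s) := by
    rw [rCoeff, coeff_single_one_eq_aeval (i, j)]
    have h2 : (MvPolynomial.aeval (fun w : Fin n × ℕ =>
        if w = (i, j) then (Polynomial.X : Polynomial ℂ) else 0))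
          ((wronskianPoly n lam).coeff (n - s))
        = ((wronskianPoly n lam).map ψ).coeff (n - s) := by
      rw [Polynomial.coeff_map]; rfl
    rw [h2, hmap]
    rw [Polynomial.coeff_add, Polynomial.coeff_C_mul, hmc]
    simp only [Polynomial.coe_mapRingHom, Polynomial.coeff_map]
    rw [Polynomial.coeff_add]
    simp [Polynomial.coeff_C]
  rw [h1] at hocc
  have hkey := det_deriv_pow_coeff e (n - s) (by rw [← hB]; exact hocc)
  -- sum computations
  have hT : ∑ a : Fin n, (a : ℕ) = ∑ b : Fin n, (n - 1 - (b : ℕ)) := by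
    rw [Fin.sum_univ_eq_sum_range (fun k => k), Fin.sum_univ_eq_sum_range (fun k => n - 1 - k)]
    exact (Finset.sum_range_reflect (fun k => k) n).symm
  have hdsum : ∑ b, dSeq n lam b = n + ∑ b : Fin n, (n - 1 - (b : ℕ)) := by
    unfold dSeq
    rw [Finset.sum_add_distrib, hsum]
  have hesum : ∑ b, e b + j = ∑ b, dSeq n lam b := by
    have hsplit : ∀ f : Fin n → ℕ, ∑ b, f b = f i + ∑ b ∈ Finset.univ.erase i, f b :=
      fun f => (Finset.add_sum_erase _ f (Finset.mem_univ i)).symm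
    rw [hsplit e, hsplit (dSeq n lam)]
    have hagree : ∑ b ∈ Finset.univ.erase i, e b = ∑ b ∈ Finset.univ.erase i, dSeq n lam b := by
      refine Finset.sum_congr rfl fun b hb => ?_
      rw [he]
      simp [if_neg (Finset.ne_of_mem_erase hb)]
    rw [hagree]
    have : e i = dSeq n lam i - j := by rw [he]; simp
    rw [this]
    omega
  omega
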